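/- Let A be a finite nonempty set and a ∈ A. The log-softmax loss x ↦ ℓ(x, a) = −log(softmax(x)_a) is √2-Lipschitz on the Euclidean space ℝ^A: for all x, y : A → ℝ, |ℓ(x, a) − ℓ(y, a)| ≤ √2 · ‖x − y‖₂. -/

import Mathlib

open scoped BigOperators

/-- Softmax on a finite type: `softmax x a = exp (x a) / ∑ a', exp (x a')`. -/
noncomputable def softmax {A : Type*} [Fintype A] (x : A → ℝ) (a : A) : ℝ :=
  Real.exp (x a) / ∑ a', Real.exp (x a')

/-- Log-softmax loss: `ℓ(x, a) = -log (softmax x a)`. -/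
noncomputable def logSoftmaxLoss {A : Type*} [Fintype A] (x : A → ℝ) (a : A) : ℝ :=
  - Real.log (softmax x a)

section Aux

open Real Finset

variable {A : Type*} [Fintype A] [Nonempty A]

lemma sumexp_pos (x : A → ℝ) : 0 < ∑ b, Real.exp (x b) :=
  Finset.sum_pos (fun _ _ => Real.exp_pos _) Finset.univ_nonempty

lemma logSoftmaxLoss_eq (x : A → ℝ) (a : A) :
    logSoftmaxLoss x a = Real.log (∑ b, Real.exp (x b)) - x a := by
  unfold logSoftmaxLoss softmax
  rw [Real.log_div (Real.exp_ne_zero _) (ne_of_gt (sumexp_pos x)), Real.log_exp]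
  ring

open Classical in
noncomputable def lsGrad (a : A) (x : EuclideanSpace ℝ A) : EuclideanSpace ℝ A :=
  WithLp.toLp 2 (fun b => softmax x b - if b = a then 1 else 0)

lemma softmax_nonneg (x : A → ℝ) (b : A) : 0 ≤ softmax x b :=
  div_nonneg (Real.exp_pos _).le (sumexp_pos x).le

lemma sum_softmax (x : A → ℝ) : ∑ b, softmax x b = 1 := by
  unfold softmax
  rw [← Finset.sum_div, div_self (ne_of_gt (sumexp_pos x))]

lemma lsGrad_norm_le (a : A) (x : EuclideanSpace ℝ A) : ‖lsGrad a x‖ ≤ Real.sqrt 2 := by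
  rw [EuclideanSpace.norm_eq]
  apply Real.sqrt_le_sqrt
  have h1 : ∀ b : A, ‖lsGrad a x b‖ ^ 2 ≤ |lsGrad a x b| := by
    intro b
    rw [Real.norm_eq_abs, sq_abs, ← sq_abs]
    apply pow_le_of_le_one (abs_nonneg _) _ (by norm_num)
    unfold lsGrad
    simp only [PiLp.toLp_apply]
    rw [abs_le]
    constructor
    · have := softmax_nonneg x b
      split_ifs <;> simp <;> linarith
    · have h2 : softmax x b ≤ 1 := by
        have := Finset.single_le_sum (f := fun b => softmax x b)
          (fun b _ => softmax_nonneg x b) (Finset.mem_univ b)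
        rw [sum_softmax] at this; exact this
      split_ifs <;> simp <;> linarith
  classical
  calc ∑ b, ‖lsGrad a x b‖ ^ 2 ≤ ∑ b, |lsGrad a x b| := Finset.sum_le_sum fun b _ => h1 b
    _ ≤ ∑ b, (softmax x b + if b = a then 1 else 0) := by
        apply Finset.sum_le_sum
        intro b _
        calc |lsGrad a x b| ≤ |softmax x b| + |if b = a then (1:ℝ) else 0| := by
              unfold lsGrad; simp only [PiLp.toLp_apply]; exact abs_sub _ _
          _ = softmax x b + if b = a then 1 else 0 := by
              rw [abs_of_nonneg (softmax_nonneg x b)]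
              congr 1; split_ifs <;> simp
    _ = 2 := by
        rw [Finset.sum_add_distrib, sum_softmax, Finset.sum_ite_eq' Finset.univ a fun _ => (1:ℝ)]
        norm_num

lemma hasFDerivAt_ls (a : A) (x : EuclideanSpace ℝ A) :
    HasFDerivAt (fun z : EuclideanSpace ℝ A => logSoftmaxLoss z a)
      (innerSL ℝ (lsGrad a x)) x := by
  have hS := sumexp_pos x
  have hsum : HasFDerivAt (fun z : EuclideanSpace ℝ A => ∑ b, Real.exp (z b))
      (∑ b, Real.exp (x b) • (EuclideanSpace.proj b : EuclideanSpace ℝ A →L[ℝ] ℝ)) x := by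
    apply HasFDerivAt.fun_sum
    intro b _
    exact ((EuclideanSpace.proj b : EuclideanSpace ℝ A →L[ℝ] ℝ).hasFDerivAt (x := x)).exp
  have hlog := hsum.log (ne_of_gt hS)
  have hf : HasFDerivAt (fun z : EuclideanSpace ℝ A => logSoftmaxLoss z a)
      ((∑ b, Real.exp (x b))⁻¹ • (∑ b, Real.exp (x b) • (EuclideanSpace.proj b : EuclideanSpace ℝ A →L[ℝ] ℝ))
        - (EuclideanSpace.proj a : EuclideanSpace ℝ A →L[ℝ] ℝ)) x := by
    have := hlog.sub ((EuclideanSpace.proj a : EuclideanSpace ℝ A →L[ℝ] ℝ).hasFDerivAt (x := x))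
    apply this.congr_of_eventuallyEq
    filter_upwards with z
    rw [logSoftmaxLoss_eq]
    rfl
  convert hf using 1
  case e'_5 => rfl
  case e'_6 => rfl
  ext v
  classical
  simp only [ContinuousLinearMap.sub_apply, ContinuousLinearMap.smul_apply,
    ContinuousLinearMap.sum_apply, PiLp.proj_apply, innerSL_apply_apply]
  rw [PiLp.inner_apply]
  simp only [RCLike.inner_apply, conj_trivial]
  unfold lsGrad softmax
  rw [Finset.smul_sum]
  simp only [mul_sub]
  rw [Finset.sum_sub_distrib]
  congr 1
  · apply Finset.sum_congr rfl
    intro b _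
    simp only [smul_eq_mul, PiLp.proj_apply]
    field_simp
  · simp [mul_ite]

end Aux

/-- The log-softmax loss `x ↦ ℓ(x, a)` is `√2`-Lipschitz on the Euclidean
space `ℝ^A`. -/
theorem logSoftmaxLoss_lipschitz {A : Type*} [Fintype A] [Nonempty A] (a : A)
    (x y : EuclideanSpace ℝ A) :
    |logSoftmaxLoss x a - logSoftmaxLoss y a| ≤ Real.sqrt 2 * ‖x - y‖ := by
  have := Convex.norm_image_sub_le_of_norm_hasFDerivWithin_le
    (f := fun z : EuclideanSpace ℝ A => logSoftmaxLoss z a)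
    (f' := fun z => innerSL ℝ (lsGrad a z)) (C := Real.sqrt 2) (s := Set.univ)
    (fun z _ => (hasFDerivAt_ls a z).hasFDerivWithinAt)
    (fun z _ => by rw [innerSL_apply_norm]; exact lsGrad_norm_le a z)
    convex_univ (Set.mem_univ y) (Set.mem_univ x)
  simpa [Real.norm_eq_abs] using this
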